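/- (Foiling the LLT by an initial distribution.) Suppose T is ergodic measure-preserving, (A_l) asymptotically rare with μ(μ(A_l)φ_{A_l} ≤ t) ⇒ F(t), F' continuous at s > 0 with F'(s) > 0, and k_l integers with μ(A_l)k_l → s. Then for every δ > 0 there exists B ∈ A with μ(B^c) < δ such that ν := μ_B satisfies ν(φ_{A_{l_j}} = k_{l_j}) = 0 for infinitely many indices l_j, while still ν(μ(A_l)φ_{A_l} ≤ t) ⇒ F(t). -/

import Mathlib

open MeasureTheory ProbabilityTheory Filter Topology
open scoped ENNReal

/-- First hitting time of a set `A` under `T`. -/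
noncomputable def hitTime {X : Type*} (T : X → X) (A : Set X) (x : X) : ℕ∞ :=
  sInf ((↑) '' {n : ℕ | 1 ≤ n ∧ T^[n] x ∈ A})

namespace HitAux

variable {X : Type*} {T : X → X} {A : Set X} {x : X}

/-- the hitting-index set -/
def S (T : X → X) (A : Set X) (x : X) : Set ℕ := {n : ℕ | 1 ≤ n ∧ T^[n] x ∈ A}

lemma hitTime_def : hitTime T A x = sInf ((↑) '' S T A x) := rfl

lemma one_le_hitTime : 1 ≤ hitTime T A x := by
  refine le_sInf ?_
  rintro b ⟨n, hn, rfl⟩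
  exact_mod_cast hn.1

lemma hitTime_eq_top (h : S T A x = ∅) : hitTime T A x = ⊤ := by
  rw [hitTime_def, h]; simp

lemma hitTime_of_nonempty (h : (S T A x).Nonempty) :
    hitTime T A x = (sInf (S T A x) : ℕ) := by
  rw [hitTime_def]
  refine le_antisymm (sInf_le ⟨_, Nat.sInf_mem h, rfl⟩) (le_sInf ?_)
  rintro b ⟨n, hn, rfl⟩
  exact_mod_cast Nat.sInf_le hn

lemma S_nonempty_of_ne_top (h : hitTime T A x ≠ ⊤) : (S T A x).Nonempty := by
  by_contra hS
  exact h (hitTime_eq_top (Set.not_nonempty_iff_eq_empty.mp hS))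

lemma hitTime_eq_coe_iff {m : ℕ} :
    hitTime T A x = (m : ℕ∞) → (S T A x).Nonempty ∧ sInf (S T A x) = m := by
  intro h
  have hne : (S T A x).Nonempty := S_nonempty_of_ne_top (by simp [h])
  have := hitTime_of_nonempty (T := T) (A := A) (x := x) hne
  rw [h] at this
  exact ⟨hne, by exact_mod_cast this.symm⟩

lemma S_iterate (k : ℕ) : S T A (T^[k] x) = {n : ℕ | 1 ≤ n ∧ T^[n + k] x ∈ A} := by
  ext n
  simp only [S, Set.mem_setOf_eq, Function.iterate_add_apply]

lemma hitTime_le_coe_iff {n : ℕ} :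
    hitTime T A x ≤ (n : ℕ∞) ↔ ∃ i, 1 ≤ i ∧ i ≤ n ∧ T^[i] x ∈ A := by
  constructor
  · intro h
    by_contra hc
    push_neg at hc
    have : (n + 1 : ℕ∞) ≤ hitTime T A x := by
      refine le_sInf ?_
      rintro b ⟨i, hi, rfl⟩
      have : ¬ i ≤ n := fun hin => absurd hi.2 (by simpa using hc i hi.1 hin)
      exact_mod_cast Nat.succ_le_of_lt (Nat.lt_of_not_le this)
    have h2 : (n + 1 : ℕ∞) ≤ n := this.trans h
    simp [ENat.add_one_le_iff] at h2
  · rintro ⟨i, h1, hin, hA⟩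
    calc hitTime T A x ≤ (i : ℕ∞) := sInf_le ⟨i, ⟨h1, hA⟩, rfl⟩
    _ ≤ (n : ℕ∞) := by exact_mod_cast hin

/-- shift: if the hit time is a finite value `m` and `k < m`, then after `k` steps it is `m - k`. -/
lemma hitTime_iterate_coe {m k : ℕ} (hm : hitTime T A x = (m : ℕ∞)) (hk : k < m) :
    hitTime T A (T^[k] x) = ((m - k : ℕ) : ℕ∞) := by
  obtain ⟨hne, hinf⟩ := hitTime_eq_coe_iff hm
  have hmS : m ∈ S T A x := hinf ▸ Nat.sInf_mem hne
  have hmem : m - k ∈ S T A (T^[k] x) := by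
    rw [S_iterate]
    refine ⟨by omega, ?_⟩
    have : m - k + k = m := by omega
    rw [this]; exact hmS.2
  have hlow : ∀ n ∈ S T A (T^[k] x), m - k ≤ n := by
    intro n hn
    rw [S_iterate] at hn
    have hnk : n + k ∈ S T A x := ⟨by have := hn.1; omega, hn.2⟩
    have h2 := Nat.sInf_le hnk
    rw [hinf] at h2
    omega
  rw [hitTime_of_nonempty ⟨_, hmem⟩]
  congr 1
  exact le_antisymm (Nat.sInf_le hmem) (le_csInf ⟨_, hmem⟩ hlow)

lemma hitTime_iterate_top {k : ℕ} (hm : hitTime T A x = ⊤) :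
    hitTime T A (T^[k] x) = ⊤ := by
  refine hitTime_eq_top ?_
  rw [S_iterate]
  ext n
  simp only [Set.mem_setOf_eq, Set.mem_empty_iff_false, iff_false]
  rintro ⟨h1, hA⟩
  have : S T A x = ∅ := by
    by_contra hS
    have := hitTime_of_nonempty (Set.nonempty_iff_ne_empty.mpr hS)
    rw [hm] at this; exact (ENat.top_ne_coe _) this
  have : n + k ∈ S T A x := ⟨by omega, hA⟩
  simp_all

/-- measurability of sublevel sets -/
lemma measurableSet_hitTime_le [MeasurableSpace X] (hT : Measurable T) (hA : MeasurableSet A)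
    (n : ℕ) : MeasurableSet {x | hitTime T A x ≤ (n : ℕ∞)} := by
  have : {x | hitTime T A x ≤ (n : ℕ∞)} = ⋃ i ∈ Set.Icc 1 n, T^[i] ⁻¹' A := by
    ext x
    simp only [Set.mem_setOf_eq, hitTime_le_coe_iff, Set.mem_iUnion, Set.mem_Icc,
      Set.mem_preimage]
    tauto
  rw [this]
  exact MeasurableSet.biUnion (Set.to_countable _) fun i _ => (hT.iterate i) hA

lemma measurableSet_hitTime_eq [MeasurableSpace X] (hT : Measurable T) (hA : MeasurableSet A)
    (m : ℕ∞) : MeasurableSet {x | hitTime T A x = m} := by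
  induction m using ENat.recTopCoe with
  | top =>
    have : {x | hitTime T A x = ⊤} = (⋃ n : ℕ, {x | hitTime T A x ≤ (n : ℕ∞)})ᶜ := by
      ext x
      simp only [Set.mem_setOf_eq, Set.mem_compl_iff, Set.mem_iUnion, not_exists]
      constructor
      · intro h n hn
        rw [h] at hn
        exact absurd hn (by simp)
      · intro h
        cases hx : hitTime T A x with
        | top => rfl
        | coe m => exact absurd (le_of_eq hx) (h m)
    rw [this]
    exact (MeasurableSet.iUnion fun n => measurableSet_hitTime_le hT hA n).compl
  | coe m =>
    match m with
    | 0 =>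
      have : {x | hitTime T A x = ((0 : ℕ) : ℕ∞)} = ∅ := by
        ext x
        simp only [Set.mem_setOf_eq, Set.mem_empty_iff_false, iff_false]
        intro h
        have := one_le_hitTime (T := T) (A := A) (x := x)
        rw [h] at this
        simp at this
      rw [this]; exact MeasurableSet.empty
    | Nat.succ n =>
      have : {x | hitTime T A x = ((n + 1 : ℕ) : ℕ∞)}
          = {x | hitTime T A x ≤ ((n + 1 : ℕ) : ℕ∞)} \ {x | hitTime T A x ≤ (n : ℕ∞)} := by
        ext x
        simp only [Set.mem_setOf_eq, Set.mem_diff]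
        constructor
        · intro h
          rw [h]
          constructor
          · rfl
          · intro hc
            have : ((n : ℕ∞) + 1) ≤ n := by exact_mod_cast hc
            simp [ENat.add_one_le_iff] at this
        · rintro ⟨h1, h2⟩
          have hlt : (n : ℕ∞) < hitTime T A x := lt_of_not_ge h2
          have : ((n : ℕ∞) + 1) ≤ hitTime T A x := ENat.add_one_le_iff (by simp) |>.mpr hlt
          refine le_antisymm h1 ?_
          exact_mod_cast this
      rw [this]
      exact (measurableSet_hitTime_le hT hA _).diff (measurableSet_hitTime_le hT hA _)

lemma measurableSet_hitTime_pred [MeasurableSpace X] (hT : Measurable T) (hA : MeasurableSet A)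
    (P : ℕ∞ → Prop) : MeasurableSet {x | P (hitTime T A x)} := by
  have : {x | P (hitTime T A x)} = ⋃ (m : ℕ∞) (_ : P m), {x | hitTime T A x = m} := by
    ext x
    simp only [Set.mem_setOf_eq, Set.mem_iUnion]
    exact ⟨fun h => ⟨_, h, rfl⟩, fun ⟨m, hm, he⟩ => he ▸ hm⟩
  rw [this]
  exact MeasurableSet.iUnion fun m => MeasurableSet.iUnion fun _ => measurableSet_hitTime_eq hT hA m

end HitAux



namespace MET

variable {X : Type*} [MeasurableSpace X] {μ : Measure X} [IsProbabilityMeasure μ] {T : X → X}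

/-- The Koopman operator on `L²` as a linear isometry. -/
noncomputable def koopman (hTm : MeasurePreserving T μ μ) : Lp ℝ 2 μ →ₗᵢ[ℝ] Lp ℝ 2 μ where
  toFun := Lp.compMeasurePreserving T hTm
  map_add' := map_add _
  map_smul' c g := by
    refine Lp.ext ?_
    calc ⇑(Lp.compMeasurePreserving T hTm (c • g))
        =ᵐ[μ] ⇑(c • g) ∘ T := Lp.coeFn_compMeasurePreserving (c • g) hTm
      _ =ᵐ[μ] (c • ⇑g) ∘ T := hTm.quasiMeasurePreserving.ae_eq_comp (Lp.coeFn_smul c g)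
      _ = c • (⇑g ∘ T) := rfl
      _ =ᵐ[μ] c • ⇑(Lp.compMeasurePreserving T hTm g) :=
          (Lp.coeFn_compMeasurePreserving g hTm).symm.const_smul c
      _ =ᵐ[μ] ⇑(c • Lp.compMeasurePreserving T hTm g) :=
          (Lp.coeFn_smul c (Lp.compMeasurePreserving T hTm g)).symm
  norm_map' g := Lp.norm_compMeasurePreserving g hTm

lemma coeFn_koopman (hTm : MeasurePreserving T μ μ) (g : Lp ℝ 2 μ) :
    ⇑(koopman hTm g) =ᵐ[μ] ⇑g ∘ T :=
  Lp.coeFn_compMeasurePreserving g hTm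

/-- The Koopman operator as a continuous linear map. -/
noncomputable def koopmanCLM (hTm : MeasurePreserving T μ μ) : Lp ℝ 2 μ →L[ℝ] Lp ℝ 2 μ :=
  (koopman hTm).toContinuousLinearMap

lemma coeFn_koopmanCLM (hTm : MeasurePreserving T μ μ) (g : Lp ℝ 2 μ) :
    ⇑(koopmanCLM hTm g) =ᵐ[μ] ⇑g ∘ T :=
  Lp.coeFn_compMeasurePreserving g hTm

lemma coeFn_koopmanCLM_iterate (hTm : MeasurePreserving T μ μ) (k : ℕ) (g : Lp ℝ 2 μ) :
    ⇑((⇑(koopmanCLM hTm))^[k] g) =ᵐ[μ] ⇑g ∘ T^[k] := by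
  induction k with
  | zero => simp [Filter.EventuallyEq.refl]
  | succ k ih =>
    rw [Function.iterate_succ_apply']
    refine (coeFn_koopmanCLM hTm _).trans ?_
    have := hTm.quasiMeasurePreserving.ae_eq_comp ih
    refine this.trans ?_
    apply Filter.EventuallyEq.of_eq
    funext x
    simp [Function.comp, Function.iterate_succ_apply]

/-- indicator of a measurable set as an element of L². -/
noncomputable def ind (μ : Measure X) [IsProbabilityMeasure μ] {s : Set X}
    (hs : MeasurableSet s) : Lp ℝ 2 μ :=
  indicatorConstLp 2 hs (measure_ne_top μ s) (1 : ℝ)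

noncomputable def one (μ : Measure X) [IsProbabilityMeasure μ] : Lp ℝ 2 μ :=
  ind μ MeasurableSet.univ

lemma coeFn_ind {s : Set X} (hs : MeasurableSet s) :
    ⇑(ind μ hs) =ᵐ[μ] s.indicator (fun _ => (1:ℝ)) := indicatorConstLp_coeFn

lemma coeFn_one : ⇑(one μ) =ᵐ[μ] fun _ => (1:ℝ) := by
  filter_upwards [coeFn_ind (μ := μ) MeasurableSet.univ] with x hx
  simpa [one] using hx

lemma inner_ind {s t : Set X} (hs : MeasurableSet s) (ht : MeasurableSet t) :
    (inner ℝ (ind μ hs) (ind μ ht) : ℝ) = (μ (s ∩ t)).toReal := by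
  rw [L2.inner_def]
  have : ∫ a, (inner ℝ (ind μ hs a) (ind μ ht a) : ℝ) ∂μ
      = ∫ a, (s ∩ t).indicator (fun _ => (1:ℝ)) a ∂μ := by
    refine integral_congr_ae ?_
    filter_upwards [coeFn_ind (μ := μ) hs, coeFn_ind (μ := μ) ht] with x h1 h2
    rw [h1, h2]
    by_cases hxs : x ∈ s <;> by_cases hxt : x ∈ t <;>
      simp [hxs, hxt, Set.indicator, Set.mem_inter_iff, RCLike.inner_apply, conj_trivial]
  rw [this]
  exact integral_indicator_one (hs.inter ht)

lemma norm_ind_le {s : Set X} (hs : MeasurableSet s) : ‖ind μ hs‖ ≤ 1 := by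
  rw [ind, norm_indicatorConstLp (by norm_num) (by norm_num)]
  simp only [norm_one, one_mul]
  refine Real.rpow_le_one (ENNReal.toReal_nonneg) ?_ (by norm_num)
  exact ENNReal.toReal_le_of_le_ofReal zero_le_one (by simpa using prob_le_one (μ := μ) (s := s))



variable {X : Type*} [MeasurableSpace X] {μ : Measure X} [IsProbabilityMeasure μ] {T : X → X}

lemma norm_koopmanCLM_le (hTm : MeasurePreserving T μ μ) : ‖koopmanCLM hTm‖ ≤ 1 :=
  LinearIsometry.norm_toContinuousLinearMap_le _

lemma koopmanCLM_one (hTm : MeasurePreserving T μ μ) : koopmanCLM hTm (one μ) = one μ := by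
  refine Lp.ext ?_
  calc ⇑(koopmanCLM hTm (one μ)) =ᵐ[μ] ⇑(one μ) ∘ T := coeFn_koopmanCLM hTm _
    _ =ᵐ[μ] (fun _ => (1:ℝ)) := hTm.quasiMeasurePreserving.ae_eq_comp coeFn_one
    _ =ᵐ[μ] ⇑(one μ) := coeFn_one.symm

lemma koopmanCLM_ind_iterate (hTm : MeasurePreserving T μ μ) (hTmeas : Measurable T)
    {s : Set X} (hs : MeasurableSet s) (k : ℕ) :
    (⇑(koopmanCLM hTm))^[k] (ind μ hs) = ind μ ((hTmeas.iterate k) hs : MeasurableSet (T^[k] ⁻¹' s)) := by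
  refine Lp.ext ?_
  calc ⇑((⇑(koopmanCLM hTm))^[k] (ind μ hs)) =ᵐ[μ] ⇑(ind μ hs) ∘ T^[k] :=
        coeFn_koopmanCLM_iterate hTm k _
    _ =ᵐ[μ] (s.indicator (fun _ => (1:ℝ))) ∘ T^[k] :=
        (hTm.iterate k).quasiMeasurePreserving.ae_eq_comp (coeFn_ind hs)
    _ = (T^[k] ⁻¹' s).indicator (fun _ => (1:ℝ)) := by
        funext x
        by_cases hx : T^[k] x ∈ s <;> simp [hx, Set.indicator, Function.comp]
    _ =ᵐ[μ] ⇑(ind μ ((hTmeas.iterate k) hs)) := (coeFn_ind _).symm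

/-- fixed points of the Koopman operator of an ergodic map are multiples of `one`. -/
lemma fixed_eq_smul_one (hT : Ergodic T μ) (w : Lp ℝ 2 μ)
    (hw : koopmanCLM hT.toMeasurePreserving w = w) : ∃ c : ℝ, w = c • one μ := by
  have h1 : ⇑w ∘ T =ᵐ[μ] ⇑w := by
    have := coeFn_koopmanCLM hT.toMeasurePreserving w
    rw [hw] at this
    exact this.symm
  obtain ⟨c, hc⟩ := hT.ae_eq_const_of_ae_eq_comp₀
    ((Lp.aestronglyMeasurable w).aemeasurable.nullMeasurable) h1
  refine ⟨c, Lp.ext ?_⟩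
  calc ⇑w =ᵐ[μ] fun _ => c := hc
    _ =ᵐ[μ] c • ⇑(one μ) := by
        filter_upwards [coeFn_one (μ := μ)] with x hx
        simp [hx]
    _ =ᵐ[μ] ⇑(c • one μ) := (Lp.coeFn_smul c (one μ)).symm

/-- Mean ergodic theorem for indicators: Birkhoff averages of `1_C` converge in `L²`
to the constant `μ C`. -/
lemma tendsto_birkhoffAverage_ind (hT : Ergodic T μ) {C : Set X} (hC : MeasurableSet C) :
    Tendsto (fun N => birkhoffAverage ℝ (⇑(koopmanCLM hT.toMeasurePreserving)) _root_.id N (ind μ hC))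
      atTop (𝓝 ((μ C).toReal • one μ)) := by
  have h := ContinuousLinearMap.tendsto_birkhoffAverage_orthogonalProjection (𝕜 := ℝ)
    (koopmanCLM hT.toMeasurePreserving) (norm_koopmanCLM_le _) (ind μ hC)
  have key : (↑(((koopmanCLM hT.toMeasurePreserving).eqLocus (1 : Lp ℝ 2 μ →L[ℝ] Lp ℝ 2 μ)).orthogonalProjectionOnto
      (ind μ hC)) : Lp ℝ 2 μ) = (μ C).toReal • one μ := by
    refine Submodule.eq_starProjection_of_mem_of_inner_eq_zero ?_ ?_
    · show koopmanCLM hT.toMeasurePreserving ((μ C).toReal • one μ) = ((μ C).toReal • one μ)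
      rw [_root_.map_smul, koopmanCLM_one]
    · intro w hw
      have hwfix : koopmanCLM hT.toMeasurePreserving w = w := hw
      obtain ⟨c, rfl⟩ := fixed_eq_smul_one hT w hwfix
      have e1 : (inner ℝ (ind μ hC) (one μ) : ℝ) = (μ C).toReal := by
        have := inner_ind (μ := μ) hC MeasurableSet.univ
        simpa [Set.inter_univ, one] using this
      have e2 : (inner ℝ (one μ) (one μ) : ℝ) = 1 := by
        have := inner_ind (μ := μ) MeasurableSet.univ MeasurableSet.univ
        simpa [Set.inter_univ, one] using this
      rw [inner_sub_left, real_inner_smul_right, real_inner_smul_right,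
        real_inner_smul_left, e1, e2]
      ring
  rw [key] at h
  exact h


end MET
section SDC

variable {X : Type*} [MeasurableSpace X] {μ : Measure X} [IsProbabilityMeasure μ] {T : X → X}

lemma meas_inter_toReal_le (μ : Measure X) [IsFiniteMeasure μ] (P E E' : Set X) :
    (μ (P ∩ E')).toReal ≤ (μ (P ∩ E)).toReal + (μ (E' \ E)).toReal := by
  have h1 : μ (P ∩ E') ≤ μ (P ∩ E) + μ (E' \ E) := by
    refine le_trans (measure_mono ?_) (measure_union_le _ _)
    intro x hx
    by_cases hxE : x ∈ E
    · exact Or.inl ⟨hx.1, hxE⟩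
    · exact Or.inr ⟨hx.2, hxE⟩
  calc (μ (P ∩ E')).toReal ≤ ((μ (P ∩ E) + μ (E' \ E))).toReal :=
        ENNReal.toReal_mono (by finiteness) h1
    _ = _ := ENNReal.toReal_add (measure_ne_top μ _) (measure_ne_top μ _)

lemma abs_meas_inter_sub_le (μ : Measure X) [IsFiniteMeasure μ] (P E E' : Set X) :
    |(μ (P ∩ E)).toReal - (μ (P ∩ E')).toReal| ≤ (μ ((E \ E') ∪ (E' \ E))).toReal := by
  rw [abs_sub_le_iff]
  constructor
  · have := meas_inter_toReal_le μ P E' E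
    have h2 : (μ (E \ E')).toReal ≤ (μ ((E \ E') ∪ (E' \ E))).toReal :=
      ENNReal.toReal_mono (measure_ne_top μ _) (measure_mono Set.subset_union_left)
    linarith
  · have := meas_inter_toReal_le μ P E E'
    have h2 : (μ (E' \ E)).toReal ≤ (μ ((E \ E') ∪ (E' \ E))).toReal :=
      ENNReal.toReal_mono (measure_ne_top μ _) (measure_mono Set.subset_union_right)
    linarith

/-- Strong distributional convergence: if the sets `E l` are asymptotically invariant,
their correlations with any fixed set `C` converge to the product of measures. -/
lemma sdc (hT : Ergodic T μ) {C : Set X} (hC : MeasurableSet C) {E : ℕ → Set X}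
    (hEm : ∀ l, MeasurableSet (E l))
    (hsym : ∀ kk : ℕ, Tendsto
      (fun l => (μ ((E l \ T^[kk] ⁻¹' E l) ∪ (T^[kk] ⁻¹' E l \ E l))).toReal) atTop (𝓝 0))
    {L : ℝ} (hlim : Tendsto (fun l => (μ (E l)).toReal) atTop (𝓝 L)) :
    Tendsto (fun l => (μ (C ∩ E l)).toReal) atTop (𝓝 (L * (μ C).toReal)) := by
  have hTm := hT.toMeasurePreserving
  have hTmeas := hTm.measurable
  rw [Metric.tendsto_atTop]
  intro ε hε
  have hε3 : 0 < ε / 3 := by linarith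
  obtain ⟨N₀, hN₀⟩ := Metric.tendsto_atTop.1 (MET.tendsto_birkhoffAverage_ind hT hC) (ε/3) hε3
  set N := max N₀ 1 with hNdef
  have hN1 : 1 ≤ N := le_max_right _ _
  have hNR : (0:ℝ) < (N:ℝ) := by exact_mod_cast Nat.lt_of_lt_of_le Nat.zero_lt_one hN1
  have hAN : ‖birkhoffAverage ℝ (⇑(MET.koopmanCLM hTm)) _root_.id N (MET.ind μ hC)
      - (μ C).toReal • MET.one μ‖ < ε/3 := by
    have := hN₀ N (le_max_left _ _)
    rwa [dist_eq_norm] at this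
  -- the inner product formula
  have hinner : ∀ l,
      (inner ℝ (birkhoffAverage ℝ (⇑(MET.koopmanCLM hTm)) _root_.id N (MET.ind μ hC))
        (MET.ind μ (hEm l)) : ℝ)
      = (N:ℝ)⁻¹ * ∑ kk ∈ Finset.range N, (μ (T^[kk] ⁻¹' C ∩ E l)).toReal := by
    intro l
    rw [birkhoffAverage, real_inner_smul_left, birkhoffSum, sum_inner]
    congr 1
    refine Finset.sum_congr rfl fun kk _ => ?_
    have : _root_.id ((⇑(MET.koopmanCLM hTm))^[kk] (MET.ind μ hC))
        = MET.ind μ ((hTmeas.iterate kk) hC) := by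
      rw [_root_.id]
      exact MET.koopmanCLM_ind_iterate hTm hTmeas hC kk
    rw [this, MET.inner_ind]
  -- step 1 : average of correlations is close to the product
  have key1 : ∀ l, |(N:ℝ)⁻¹ * (∑ kk ∈ Finset.range N, (μ (T^[kk] ⁻¹' C ∩ E l)).toReal)
      - (μ C).toReal * (μ (E l)).toReal| ≤ ε/3 := by
    intro l
    have e1 : (inner ℝ (MET.one μ) (MET.ind μ (hEm l)) : ℝ) = (μ (E l)).toReal := by
      have := MET.inner_ind (μ := μ) MeasurableSet.univ (hEm l)
      simpa [Set.univ_inter, MET.one] using this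
    have e2 : (N:ℝ)⁻¹ * (∑ kk ∈ Finset.range N, (μ (T^[kk] ⁻¹' C ∩ E l)).toReal)
        - (μ C).toReal * (μ (E l)).toReal
        = (inner ℝ (birkhoffAverage ℝ (⇑(MET.koopmanCLM hTm)) _root_.id N (MET.ind μ hC)
            - (μ C).toReal • MET.one μ) (MET.ind μ (hEm l)) : ℝ) := by
      rw [inner_sub_left, real_inner_smul_left, hinner, e1]
    rw [e2]
    calc |(inner ℝ _ (MET.ind μ (hEm l)) : ℝ)|
        ≤ ‖birkhoffAverage ℝ (⇑(MET.koopmanCLM hTm)) _root_.id N (MET.ind μ hC)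
            - (μ C).toReal • MET.one μ‖ * ‖MET.ind μ (hEm l)‖ := abs_real_inner_le_norm _ _
      _ ≤ ‖birkhoffAverage ℝ (⇑(MET.koopmanCLM hTm)) _root_.id N (MET.ind μ hC)
            - (μ C).toReal • MET.one μ‖ * 1 := by
          refine mul_le_mul_of_nonneg_left (MET.norm_ind_le _) (norm_nonneg _)
      _ ≤ ε/3 := by rw [mul_one]; exact le_of_lt hAN
  -- step 2 : each correlation with shifted C is close to the one with C
  have key2 : ∀ kk l, |(μ (C ∩ E l)).toReal - (μ (T^[kk] ⁻¹' C ∩ E l)).toReal|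
      ≤ (μ ((E l \ T^[kk] ⁻¹' E l) ∪ (T^[kk] ⁻¹' E l \ E l))).toReal := by
    intro kk l
    have hpre : μ (C ∩ E l) = μ (T^[kk] ⁻¹' C ∩ T^[kk] ⁻¹' E l) := by
      rw [← Set.preimage_inter]
      exact ((hTm.iterate kk).measure_preimage (hC.inter (hEm l)).nullMeasurableSet).symm
    rw [hpre, abs_sub_comm]
    exact abs_meas_inter_sub_le μ _ _ _
  -- step 3 : the error terms vanish
  have key3 : Tendsto (fun l => (N:ℝ)⁻¹ * ∑ kk ∈ Finset.range N,
      (μ ((E l \ T^[kk] ⁻¹' E l) ∪ (T^[kk] ⁻¹' E l \ E l))).toReal) atTop (𝓝 0) := by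
    have h1 : Tendsto (fun l => ∑ kk ∈ Finset.range N,
        (μ ((E l \ T^[kk] ⁻¹' E l) ∪ (T^[kk] ⁻¹' E l \ E l))).toReal) atTop (𝓝 0) := by
      have := tendsto_finset_sum (Finset.range N) (fun kk _ => hsym kk)
      simpa using this
    have := h1.const_mul ((N:ℝ)⁻¹)
    simpa using this
  obtain ⟨N₂, hN₂⟩ := Metric.tendsto_atTop.1 key3 (ε/3) hε3
  obtain ⟨N₃, hN₃⟩ := Metric.tendsto_atTop.1 hlim (ε/3) hε3
  refine ⟨max N₂ N₃, fun l hl => ?_⟩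
  have hl2 : N₂ ≤ l := le_trans (le_max_left _ _) hl
  have hl3 : N₃ ≤ l := le_trans (le_max_right _ _) hl
  rw [Real.dist_eq]
  set g := (μ (C ∩ E l)).toReal with hg
  set S := (N:ℝ)⁻¹ * ∑ kk ∈ Finset.range N, (μ (T^[kk] ⁻¹' C ∩ E l)).toReal with hS
  -- t1 : |g - S| < ε/3
  have t1 : |g - S| < ε/3 := by
    have e0 : g - S = (N:ℝ)⁻¹ * ∑ kk ∈ Finset.range N,
        (g - (μ (T^[kk] ⁻¹' C ∩ E l)).toReal) := by
      rw [Finset.sum_sub_distrib, Finset.sum_const, Finset.card_range, nsmul_eq_mul, hS]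
      field_simp
    have e1 : |g - S| ≤ (N:ℝ)⁻¹ * ∑ kk ∈ Finset.range N,
        (μ ((E l \ T^[kk] ⁻¹' E l) ∪ (T^[kk] ⁻¹' E l \ E l))).toReal := by
      rw [e0, abs_mul, abs_of_nonneg (inv_nonneg.2 hNR.le)]
      refine mul_le_mul_of_nonneg_left ?_ (inv_nonneg.2 hNR.le)
      refine le_trans (Finset.abs_sum_le_sum_abs _ _) ?_
      exact Finset.sum_le_sum fun kk _ => key2 kk l
    refine lt_of_le_of_lt e1 ?_
    have := hN₂ l hl2
    rw [Real.dist_eq, sub_zero] at this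
    calc (N:ℝ)⁻¹ * ∑ kk ∈ Finset.range N,
        (μ ((E l \ T^[kk] ⁻¹' E l) ∪ (T^[kk] ⁻¹' E l \ E l))).toReal
        ≤ |(N:ℝ)⁻¹ * ∑ kk ∈ Finset.range N,
          (μ ((E l \ T^[kk] ⁻¹' E l) ∪ (T^[kk] ⁻¹' E l \ E l))).toReal| := le_abs_self _
      _ < ε/3 := this
  -- t2
  have t2 : |S - (μ C).toReal * (μ (E l)).toReal| ≤ ε/3 := key1 l
  -- t3
  have t3 : |(μ C).toReal * (μ (E l)).toReal - L * (μ C).toReal| < ε/3 := by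
    have hC1 : (μ C).toReal ≤ 1 := by
      have := ENNReal.toReal_mono (by finiteness) (prob_le_one (μ := μ) (s := C))
      simpa using this
    have := hN₃ l hl3
    rw [Real.dist_eq] at this
    have e : (μ C).toReal * (μ (E l)).toReal - L * (μ C).toReal
        = (μ C).toReal * ((μ (E l)).toReal - L) := by ring
    rw [e, abs_mul, abs_of_nonneg ENNReal.toReal_nonneg]
    calc (μ C).toReal * |(μ (E l)).toReal - L| ≤ 1 * |(μ (E l)).toReal - L| :=
          mul_le_mul_of_nonneg_right hC1 (abs_nonneg _)
      _ < ε/3 := by rw [one_mul]; exact this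
  have u1 := abs_sub_le g S (L * (μ C).toReal)
  have u2 := abs_sub_le S ((μ C).toReal * (μ (E l)).toReal) (L * (μ C).toReal)
  linarith

end SDC
section Squeeze

open intervalIntegral in
lemma F_continuousAt {F F' : ℝ → ℝ} (hF'anti : AntitoneOn F' (Set.Ici 0))
    (hdens : ∀ t : ℝ, 0 ≤ t → F t = ∫ s in (0:ℝ)..t, F' s) {t : ℝ} (ht : 0 < t) :
    ContinuousAt F t := by
  set b := t + 1 with hb
  have hb0 : (0:ℝ) ≤ b := by linarith
  have hint : IntervalIntegrable F' MeasureTheory.volume 0 b := by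
    refine AntitoneOn.intervalIntegrable ?_
    refine hF'anti.mono ?_
    rw [Set.uIcc_of_le hb0]
    exact Set.Icc_subset_Ici_self
  have hIoc : MeasureTheory.IntegrableOn F' (Set.Icc 0 b) MeasureTheory.volume :=
    (intervalIntegrable_iff_integrableOn_Icc_of_le hb0).1 hint
  have hcontOn : ContinuousOn (fun u => ∫ s in Set.Ioc (0:ℝ) u, F' s) (Set.Icc 0 b) :=
    intervalIntegral.continuousOn_primitive hIoc
  have hmem : Set.Icc (0:ℝ) b ∈ 𝓝 t := Icc_mem_nhds ht (by rw [hb]; linarith)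
  have hG : ContinuousAt (fun u => ∫ s in Set.Ioc (0:ℝ) u, F' s) t :=
    hcontOn.continuousAt hmem
  refine hG.congr ?_
  filter_upwards [Ioi_mem_nhds ht] with u hu
  rw [hdens u (le_of_lt hu), intervalIntegral.integral_of_le (le_of_lt hu)]

variable {X : Type*} [MeasurableSpace X] {μ : Measure X} [IsProbabilityMeasure μ]

/-- Squeeze lemma: distributional convergence at all positive continuity points upgrades to
convergence along varying thresholds. -/
lemma squeeze_lemma {Y : ℕ → X → ℝ≥0∞} {F : ℝ → ℝ}
    (hcvg : ∀ t : ℝ, ContinuousAt F t →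
      Tendsto (fun l => (μ {x | Y l x ≤ ENNReal.ofReal t}).toReal) atTop (𝓝 (F t)))
    (hFcont : ∀ t : ℝ, 0 < t → ContinuousAt F t)
    {t : ℝ} (ht : 0 < t) {c : ℕ → ℝ≥0∞} (hc : Tendsto c atTop (𝓝 (ENNReal.ofReal t))) :
    Tendsto (fun l => (μ {x | Y l x ≤ c l}).toReal) atTop (𝓝 (F t)) := by
  rw [tendsto_order]
  constructor
  · intro b hb
    obtain ⟨δ, hδ0, hδ⟩ := Metric.continuousAt_iff.1 (hFcont t ht) (F t - b) (by linarith)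
    set t' := t - min δ t / 2 with ht'
    have ht'0 : 0 < t' := by
      have : min δ t ≤ t := min_le_right _ _
      rw [ht']; linarith
    have ht't : t' < t := by
      have : 0 < min δ t := lt_min hδ0 ht
      rw [ht']; linarith
    have hFt' : b < F t' := by
      have hd : dist t' t < δ := by
        rw [Real.dist_eq, ht']
        have h1 : 0 < min δ t := lt_min hδ0 ht
        have h2 : min δ t ≤ δ := min_le_left _ _
        rw [abs_of_nonpos (by linarith)]
        linarith
      have := hδ hd
      rw [Real.dist_eq, abs_sub_lt_iff] at this
      linarith
    have h1 := hcvg t' (hFcont t' ht'0)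
    have ev1 : ∀ᶠ l in atTop, b < (μ {x | Y l x ≤ ENNReal.ofReal t'}).toReal :=
      h1.eventually (eventually_gt_nhds hFt')
    have hlt : ENNReal.ofReal t' < ENNReal.ofReal t := (ENNReal.ofReal_lt_ofReal_iff ht).2 ht't
    have ev2 : ∀ᶠ l in atTop, ENNReal.ofReal t' ≤ c l :=
      hc.eventually (eventually_ge_nhds hlt)
    filter_upwards [ev1, ev2] with l hb1 hb2
    refine lt_of_lt_of_le hb1 ?_
    refine ENNReal.toReal_mono (measure_ne_top _ _) (measure_mono ?_)
    intro x hx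
    exact le_trans hx hb2
  · intro b hb
    obtain ⟨δ, hδ0, hδ⟩ := Metric.continuousAt_iff.1 (hFcont t ht) (b - F t) (by linarith)
    set t' := t + δ / 2 with ht'
    have ht'0 : 0 < t' := by rw [ht']; linarith
    have ht't : t < t' := by rw [ht']; linarith
    have hFt' : F t' < b := by
      have hd : dist t' t < δ := by
        rw [Real.dist_eq, ht', abs_of_nonneg (by linarith)]
        linarith
      have := hδ hd
      rw [Real.dist_eq, abs_sub_lt_iff] at this
      linarith
    have h1 := hcvg t' (hFcont t' ht'0)
    have ev1 : ∀ᶠ l in atTop, (μ {x | Y l x ≤ ENNReal.ofReal t'}).toReal < b :=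
      h1.eventually (eventually_lt_nhds hFt')
    have hlt : ENNReal.ofReal t < ENNReal.ofReal t' := (ENNReal.ofReal_lt_ofReal_iff ht'0).2 ht't
    have ev2 : ∀ᶠ l in atTop, c l ≤ ENNReal.ofReal t' :=
      hc.eventually (eventually_le_nhds hlt)
    filter_upwards [ev1, ev2] with l hb1 hb2
    refine lt_of_le_of_lt ?_ hb1
    refine ENNReal.toReal_mono (measure_ne_top _ _) (measure_mono ?_)
    intro x hx
    exact le_trans hx hb2

end Squeeze

namespace HitAux2

open HitAux

variable {X : Type*} [MeasurableSpace X] {μ : Measure X} {T : X → X}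

lemma measure_hitTime_le_le (hTm : MeasurePreserving T μ μ) {A : Set X}
    (hA : MeasurableSet A) (n : ℕ) :
    μ {x | hitTime T A x ≤ (n : ℕ∞)} ≤ n * μ A := by
  have hset : {x | hitTime T A x ≤ (n : ℕ∞)} = ⋃ i ∈ Finset.Icc 1 n, T^[i] ⁻¹' A := by
    ext x
    simp only [Set.mem_setOf_eq, hitTime_le_coe_iff, Set.mem_iUnion, Finset.mem_Icc,
      Set.mem_preimage]
    tauto
  rw [hset]
  refine le_trans (measure_biUnion_finset_le _ _) ?_
  have hsame : ∀ i ∈ Finset.Icc 1 n, μ (T^[i] ⁻¹' A) = μ A := fun i _ =>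
    (hTm.iterate i).measure_preimage hA.nullMeasurableSet
  rw [Finset.sum_congr rfl hsame, Finset.sum_const, Nat.card_Icc]
  simp [nsmul_eq_mul]

variable [IsProbabilityMeasure μ]

/-- The measure of `{φ_{A l} = k l}` tends to `0`. -/
lemma llt_zero (hTmeas : Measurable T) {A : ℕ → Set X} (hmeas : ∀ l, MeasurableSet (A l))
    (hpos : ∀ l, 0 < μ (A l)) (hrare : Tendsto (fun l => μ (A l)) atTop (𝓝 0))
    {F : ℝ → ℝ}
    (hcvg : ∀ t : ℝ, ContinuousAt F t →
      Tendsto (fun l =>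
          (μ {x | μ (A l) * ((hitTime T (A l) x : ℕ∞) : ℝ≥0∞) ≤ ENNReal.ofReal t}).toReal)
        atTop (𝓝 (F t)))
    (hFcont : ∀ t : ℝ, 0 < t → ContinuousAt F t)
    {s : ℝ} (hs : 0 < s) {k : ℕ → ℕ} (hk1 : ∀ l, 1 ≤ k l)
    (hks : Tendsto (fun l => (μ (A l)).toReal * (k l : ℝ)) atTop (𝓝 s)) :
    Tendsto (fun l => (μ {x | hitTime T (A l) x = (k l : ℕ∞)}).toReal) atTop (𝓝 0) := by
  have hane : ∀ l, μ (A l) ≠ ⊤ := fun l => measure_ne_top μ _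
  have ha0 : ∀ l, μ (A l) ≠ 0 := fun l => (hpos l).ne'
  have haT : Tendsto (fun l => (μ (A l)).toReal) atTop (𝓝 0) := by
    have h := (ENNReal.tendsto_toReal (a := 0) (by simp)).comp hrare
    simpa [Function.comp_def] using h
  have hc1 : Tendsto (fun l => μ (A l) * (k l : ℝ≥0∞)) atTop (𝓝 (ENNReal.ofReal s)) := by
    have he : ∀ l, μ (A l) * (k l : ℝ≥0∞)
        = ENNReal.ofReal ((μ (A l)).toReal * (k l : ℝ)) := by
      intro l
      rw [ENNReal.ofReal_mul ENNReal.toReal_nonneg, ENNReal.ofReal_toReal (hane l),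
        ENNReal.ofReal_natCast]
    simp only [he]
    exact ENNReal.tendsto_ofReal hks
  have hks' : Tendsto (fun l => (μ (A l)).toReal * ((k l : ℝ) - 1)) atTop (𝓝 s) := by
    have h2 := hks.sub haT
    simp only [mul_sub, mul_one] at *
    simpa using h2
  have hc2 : Tendsto (fun l => μ (A l) * ((k l - 1 : ℕ) : ℝ≥0∞)) atTop
      (𝓝 (ENNReal.ofReal s)) := by
    have he : ∀ l, μ (A l) * ((k l - 1 : ℕ) : ℝ≥0∞)
        = ENNReal.ofReal ((μ (A l)).toReal * ((k l : ℝ) - 1)) := by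
      intro l
      rw [ENNReal.ofReal_mul ENNReal.toReal_nonneg, ENNReal.ofReal_toReal (hane l)]
      congr 1
      have hcast : ((k l : ℝ) - 1) = ((k l - 1 : ℕ) : ℝ) := by
        rw [Nat.cast_sub (hk1 l)]; simp
      rw [hcast, ENNReal.ofReal_natCast]
    simp only [he]
    exact ENNReal.tendsto_ofReal hks'
  have sq1 := squeeze_lemma (μ := μ)
    (Y := fun l x => μ (A l) * ((hitTime T (A l) x : ℕ∞) : ℝ≥0∞)) hcvg hFcont hs hc1
  have sq2 := squeeze_lemma (μ := μ)
    (Y := fun l x => μ (A l) * ((hitTime T (A l) x : ℕ∞) : ℝ≥0∞)) hcvg hFcont hs hc2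
  have hg := sq1.sub sq2
  rw [sub_self] at hg
  refine squeeze_zero (fun l => ENNReal.toReal_nonneg) ?_ hg
  intro l
  have hKE1 : {x | hitTime T (A l) x = (k l : ℕ∞)}
      ⊆ {x | μ (A l) * ((hitTime T (A l) x : ℕ∞) : ℝ≥0∞) ≤ μ (A l) * (k l : ℝ≥0∞)} := by
    intro x hx
    have hx' : hitTime T (A l) x = (k l : ℕ∞) := hx
    show μ (A l) * ((hitTime T (A l) x : ℕ∞) : ℝ≥0∞) ≤ μ (A l) * (k l : ℝ≥0∞)
    rw [hx', ENat.toENNReal_coe]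
  have hdisj : Disjoint {x | μ (A l) * ((hitTime T (A l) x : ℕ∞) : ℝ≥0∞)
        ≤ μ (A l) * ((k l - 1 : ℕ) : ℝ≥0∞)} {x | hitTime T (A l) x = (k l : ℕ∞)} := by
    rw [Set.disjoint_right]
    intro x hxK hxE2
    have hx' : hitTime T (A l) x = (k l : ℕ∞) := hxK
    have hxE2' : μ (A l) * ((hitTime T (A l) x : ℕ∞) : ℝ≥0∞)
        ≤ μ (A l) * ((k l - 1 : ℕ) : ℝ≥0∞) := hxE2
    rw [hx', ENat.toENNReal_coe] at hxE2'
    have hle : ((k l : ℕ) : ℝ≥0∞) ≤ ((k l - 1 : ℕ) : ℝ≥0∞) :=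
      (ENNReal.mul_le_mul_iff_right (ha0 l) (hane l)).1 hxE2'
    have h1 : (k l : ℕ) ≤ k l - 1 := by exact_mod_cast hle
    have h2 := hk1 l
    omega
  have hE2E1 : {x | μ (A l) * ((hitTime T (A l) x : ℕ∞) : ℝ≥0∞)
        ≤ μ (A l) * ((k l - 1 : ℕ) : ℝ≥0∞)}
      ⊆ {x | μ (A l) * ((hitTime T (A l) x : ℕ∞) : ℝ≥0∞) ≤ μ (A l) * (k l : ℝ≥0∞)} := by
    intro x hx
    have hx' : μ (A l) * ((hitTime T (A l) x : ℕ∞) : ℝ≥0∞)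
        ≤ μ (A l) * ((k l - 1 : ℕ) : ℝ≥0∞) := hx
    refine le_trans hx' ?_
    exact mul_le_mul_right (by exact_mod_cast Nat.sub_le (k l) 1) _
  have hmeasK : MeasurableSet {x | hitTime T (A l) x = (k l : ℕ∞)} :=
    measurableSet_hitTime_eq hTmeas (hmeas l) _
  have hunion : μ {x | μ (A l) * ((hitTime T (A l) x : ℕ∞) : ℝ≥0∞)
        ≤ μ (A l) * ((k l - 1 : ℕ) : ℝ≥0∞)} + μ {x | hitTime T (A l) x = (k l : ℕ∞)}
      ≤ μ {x | μ (A l) * ((hitTime T (A l) x : ℕ∞) : ℝ≥0∞) ≤ μ (A l) * (k l : ℝ≥0∞)} := by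
    rw [← measure_union hdisj hmeasK]
    exact measure_mono (Set.union_subset hE2E1 hKE1)
  have hto := ENNReal.toReal_mono (measure_ne_top μ _) hunion
  rw [ENNReal.toReal_add (measure_ne_top μ _) (measure_ne_top μ _)] at hto
  linarith

end HitAux2

section MainPos

open HitAux HitAux2

variable {X : Type*} [MeasurableSpace X] {μ : Measure X} [IsProbabilityMeasure μ] {T : X → X}

/-- For `t > 0`, the conditional measures converge to `F t` as well. -/
lemma main_pos (hT : Ergodic T μ) {A : ℕ → Set X} (hmeas : ∀ l, MeasurableSet (A l))
    (hpos : ∀ l, 0 < μ (A l)) (hrare : Tendsto (fun l => μ (A l)) atTop (𝓝 0))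
    {F : ℝ → ℝ}
    (hcvg : ∀ t : ℝ, ContinuousAt F t →
      Tendsto (fun l =>
          (μ {x | μ (A l) * ((hitTime T (A l) x : ℕ∞) : ℝ≥0∞) ≤ ENNReal.ofReal t}).toReal)
        atTop (𝓝 (F t)))
    (hFcont : ∀ t : ℝ, 0 < t → ContinuousAt F t)
    {B : Set X} (hBmeas : MeasurableSet B) (hB0 : μ B ≠ 0)
    {t : ℝ} (ht : 0 < t) (hFt : ContinuousAt F t) :
    Tendsto (fun l =>
        ((μ[|B]) {x | μ (A l) * ((hitTime T (A l) x : ℕ∞) : ℝ≥0∞) ≤ ENNReal.ofReal t}).toReal)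
      atTop (𝓝 (F t)) := by
  have hTm := hT.toMeasurePreserving
  have hTmeas := hTm.measurable
  have hane : ∀ l, μ (A l) ≠ ⊤ := fun l => measure_ne_top μ _
  have ha0 : ∀ l, μ (A l) ≠ 0 := fun l => (hpos l).ne'
  have haT : Tendsto (fun l => (μ (A l)).toReal) atTop (𝓝 0) := by
    have h := (ENNReal.tendsto_toReal (a := 0) (by simp)).comp hrare
    simpa [Function.comp_def] using h
  set E : ℕ → Set X :=
    fun l => {x | μ (A l) * ((hitTime T (A l) x : ℕ∞) : ℝ≥0∞) ≤ ENNReal.ofReal t} with hE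
  have hEm : ∀ l, MeasurableSet (E l) := fun l =>
    measurableSet_hitTime_pred hTmeas (hmeas l)
      (fun m => μ (A l) * (m : ℝ≥0∞) ≤ ENNReal.ofReal t)
  have hlim : Tendsto (fun l => (μ (E l)).toReal) atTop (𝓝 (F t)) := hcvg t hFt
  -- asymptotic invariance of the sets E l
  have hsym : ∀ kk : ℕ, Tendsto
      (fun l => (μ ((E l \ T^[kk] ⁻¹' E l) ∪ (T^[kk] ⁻¹' E l \ E l))).toReal) atTop (𝓝 0) := by
    intro kk
    -- threshold sequence
    have hc' : Tendsto (fun l => ENNReal.ofReal t + μ (A l) * (kk : ℝ≥0∞)) atTop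
        (𝓝 (ENNReal.ofReal t)) := by
      have h1 : Tendsto (fun l => μ (A l) * (kk : ℝ≥0∞)) atTop (𝓝 0) := by
        have := ENNReal.Tendsto.mul_const hrare
          (Or.inr (ENNReal.natCast_ne_top kk))
        simpa using this
      have h2 := Tendsto.add (tendsto_const_nhds (x := ENNReal.ofReal t) (f := atTop (α := ℕ))) h1
      simpa using h2
    have sqt := squeeze_lemma (μ := μ)
      (Y := fun l x => μ (A l) * ((hitTime T (A l) x : ℕ∞) : ℝ≥0∞)) hcvg hFcont ht hc'
    -- the inclusion
    have hincl : ∀ l, (E l \ T^[kk] ⁻¹' E l) ∪ (T^[kk] ⁻¹' E l \ E l)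
        ⊆ {x | hitTime T (A l) x ≤ (kk : ℕ∞)}
          ∪ ({x | μ (A l) * ((hitTime T (A l) x : ℕ∞) : ℝ≥0∞)
              ≤ ENNReal.ofReal t + μ (A l) * (kk : ℝ≥0∞)} \ E l) := by
      intro l x hx
      by_cases hφ : hitTime T (A l) x ≤ (kk : ℕ∞)
      · exact Or.inl hφ
      · push_neg at hφ
        cases hval : hitTime T (A l) x with
        | top =>
          exfalso
          have htop : ∀ y : X, hitTime T (A l) y = ⊤ →
              ¬ μ (A l) * ((hitTime T (A l) y : ℕ∞) : ℝ≥0∞) ≤ ENNReal.ofReal t := by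
            intro y hy hc
            rw [hy, ENat.toENNReal_top, ENNReal.mul_top (ha0 l)] at hc
            exact ENNReal.ofReal_ne_top (top_le_iff.1 hc)
          rcases hx with ⟨hxE, _⟩ | ⟨hxP, _⟩
          · exact htop x hval hxE
          · exact htop (T^[kk] x) (hitTime_iterate_top hval) hxP
        | coe m =>
          have hkm : kk < m := by exact_mod_cast hval ▸ hφ
          have hshift := hitTime_iterate_coe (T := T) (A := A l) (x := x) hval hkm
          rcases hx with ⟨hxE, hxP⟩ | ⟨hxP, hxE⟩
          · exfalso
            apply hxP
            show μ (A l) * ((hitTime T (A l) (T^[kk] x) : ℕ∞) : ℝ≥0∞) ≤ ENNReal.ofReal t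
            have hxE' : μ (A l) * ((hitTime T (A l) x : ℕ∞) : ℝ≥0∞) ≤ ENNReal.ofReal t := hxE
            rw [hval, ENat.toENNReal_coe] at hxE'
            rw [hshift, ENat.toENNReal_coe]
            refine le_trans (mul_le_mul_right ?_ _) hxE'
            exact_mod_cast Nat.sub_le m kk
          · refine Or.inr ⟨?_, hxE⟩
            show μ (A l) * ((hitTime T (A l) x : ℕ∞) : ℝ≥0∞)
              ≤ ENNReal.ofReal t + μ (A l) * (kk : ℝ≥0∞)
            have hxP' : μ (A l) * ((hitTime T (A l) (T^[kk] x) : ℕ∞) : ℝ≥0∞)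
                ≤ ENNReal.ofReal t := hxP
            rw [hshift, ENat.toENNReal_coe] at hxP'
            rw [hval, ENat.toENNReal_coe]
            have hm : ((m : ℕ) : ℝ≥0∞) = ((m - kk : ℕ) : ℝ≥0∞) + ((kk : ℕ) : ℝ≥0∞) := by
              rw [← Nat.cast_add]
              congr 1
              omega
            calc μ (A l) * ((m : ℕ) : ℝ≥0∞)
                = μ (A l) * ((m - kk : ℕ) : ℝ≥0∞) + μ (A l) * ((kk : ℕ) : ℝ≥0∞) := by
                  rw [hm, mul_add]
              _ ≤ ENNReal.ofReal t + μ (A l) * ((kk : ℕ) : ℝ≥0∞) :=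
                  add_le_add_left hxP' _
    -- measure bound and squeeze
    refine squeeze_zero (fun l => ENNReal.toReal_nonneg) ?_ ?_
      (g := fun l => (kk : ℝ) * (μ (A l)).toReal
        + ((μ {x | μ (A l) * ((hitTime T (A l) x : ℕ∞) : ℝ≥0∞)
            ≤ ENNReal.ofReal t + μ (A l) * (kk : ℝ≥0∞)}).toReal - (μ (E l)).toReal))
    · intro l
      beta_reduce
      have hsub : E l ⊆ {x | μ (A l) * ((hitTime T (A l) x : ℕ∞) : ℝ≥0∞)
          ≤ ENNReal.ofReal t + μ (A l) * (kk : ℝ≥0∞)} := by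
        intro x hx
        have hx' : μ (A l) * ((hitTime T (A l) x : ℕ∞) : ℝ≥0∞) ≤ ENNReal.ofReal t := hx
        show μ (A l) * ((hitTime T (A l) x : ℕ∞) : ℝ≥0∞)
          ≤ ENNReal.ofReal t + μ (A l) * (kk : ℝ≥0∞)
        exact le_trans hx' le_self_add
      have hmeasBig : MeasurableSet {x | μ (A l) * ((hitTime T (A l) x : ℕ∞) : ℝ≥0∞)
          ≤ ENNReal.ofReal t + μ (A l) * (kk : ℝ≥0∞)} :=
        measurableSet_hitTime_pred hTmeas (hmeas l)
          (fun m => μ (A l) * (m : ℝ≥0∞) ≤ ENNReal.ofReal t + μ (A l) * (kk : ℝ≥0∞))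
      have h1 : μ ((E l \ T^[kk] ⁻¹' E l) ∪ (T^[kk] ⁻¹' E l \ E l))
          ≤ μ {x | hitTime T (A l) x ≤ (kk : ℕ∞)}
            + μ ({x | μ (A l) * ((hitTime T (A l) x : ℕ∞) : ℝ≥0∞)
                ≤ ENNReal.ofReal t + μ (A l) * (kk : ℝ≥0∞)} \ E l) :=
        le_trans (measure_mono (hincl l)) (measure_union_le _ _)
      have h2 : μ {x | hitTime T (A l) x ≤ (kk : ℕ∞)} ≤ (kk : ℝ≥0∞) * μ (A l) :=
        measure_hitTime_le_le hTm (hmeas l) kk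
      have h3 : (μ {x | hitTime T (A l) x ≤ (kk : ℕ∞)}).toReal ≤ (kk : ℝ) * (μ (A l)).toReal := by
        have h2' := ENNReal.toReal_mono (by finiteness) h2
        rw [ENNReal.toReal_mul] at h2'
        simpa using h2'
      have h4 : (μ ({x | μ (A l) * ((hitTime T (A l) x : ℕ∞) : ℝ≥0∞)
            ≤ ENNReal.ofReal t + μ (A l) * (kk : ℝ≥0∞)} \ E l)).toReal
          = (μ {x | μ (A l) * ((hitTime T (A l) x : ℕ∞) : ℝ≥0∞)
            ≤ ENNReal.ofReal t + μ (A l) * (kk : ℝ≥0∞)}).toReal - (μ (E l)).toReal := by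
        rw [measure_diff hsub (hEm l).nullMeasurableSet (measure_ne_top μ _)]
        rw [ENNReal.toReal_sub_of_le (measure_mono hsub) (measure_ne_top μ _)]
      have h5 := ENNReal.toReal_mono (by finiteness) h1
      rw [ENNReal.toReal_add (measure_ne_top μ _) (measure_ne_top μ _), h4] at h5
      linarith
    · have hsum := (haT.const_mul (kk : ℝ)).add (sqt.sub hlim)
      simpa using hsum
  -- apply strong distributional convergence with C = Bᶜ
  have hmain := sdc hT hBmeas.compl hEm hsym hlim
  -- final algebra
  set cB := (μ B).toReal with hcB
  set cc := (μ Bᶜ).toReal with hcc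
  have hcBpos : 0 < cB := ENNReal.toReal_pos hB0 (measure_ne_top μ B)
  have hsum1 : cB + cc = 1 := by
    have h0 : μ B + μ Bᶜ = 1 := by
      rw [measure_add_measure_compl hBmeas, measure_univ]
    have h := congrArg ENNReal.toReal h0
    rw [ENNReal.toReal_add (measure_ne_top μ _) (measure_ne_top μ _)] at h
    simpa using h
  have hrepr : ∀ l, ((μ[|B]) (E l)).toReal
      = cB⁻¹ * ((μ (E l)).toReal - (μ (Bᶜ ∩ E l)).toReal) := by
    intro l
    rw [ProbabilityTheory.cond_apply hBmeas, ENNReal.toReal_mul, ENNReal.toReal_inv]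
    congr 1
    have h1 : μ (E l ∩ B) + μ (E l \ B) = μ (E l) := measure_inter_add_diff _ hBmeas
    have h2 : E l \ B = Bᶜ ∩ E l := by rw [Set.diff_eq, Set.inter_comm]
    have h3 : E l ∩ B = B ∩ E l := Set.inter_comm _ _
    rw [h2, h3] at h1
    have h4 := congrArg ENNReal.toReal h1
    rw [ENNReal.toReal_add (measure_ne_top μ _) (measure_ne_top μ _)] at h4
    linarith
  have hfinal : Tendsto (fun l => cB⁻¹ * ((μ (E l)).toReal - (μ (Bᶜ ∩ E l)).toReal)) atTop
      (𝓝 (cB⁻¹ * (F t - F t * cc))) := tendsto_const_nhds.mul (hlim.sub hmain)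
  have hval2 : cB⁻¹ * (F t - F t * cc) = F t := by
    have hcc1 : cc = 1 - cB := by linarith
    rw [hcc1]
    field_simp
    ring
  rw [hval2] at hfinal
  have hfun : (fun l => ((μ[|B]) (E l)).toReal)
      = fun l => cB⁻¹ * ((μ (E l)).toReal - (μ (Bᶜ ∩ E l)).toReal) := funext hrepr
  show Tendsto (fun l => ((μ[|B]) (E l)).toReal) atTop (𝓝 (F t))
  rw [hfun]
  exact hfinal

end MainPos


/-- Initial distributions foiling the LLT for hitting times: under distributional
convergence to `F` with `F'` continuous and positive at `s`, and `μ(A l)·k l → s`, for every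
`δ > 0` there is `B` with `μ(Bᶜ) < δ` such that `ν := μ_B` still satisfies the
distributional limit theorem, while `ν(φ_{A l} = k l) = 0` for infinitely many `l`. -/
theorem stmt_10 {X : Type*} [MeasurableSpace X] {μ : Measure X} [IsProbabilityMeasure μ]
    {T : X → X} (hT : Ergodic T μ) {A : ℕ → Set X} (hmeas : ∀ l, MeasurableSet (A l))
    (hpos : ∀ l, 0 < μ (A l)) (hrare : Tendsto (fun l => μ (A l)) atTop (𝓝 0))
    {F F' : ℝ → ℝ}
    (hcvg : ∀ t : ℝ, ContinuousAt F t →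
      Tendsto (fun l =>
          (μ {x | μ (A l) * ((hitTime T (A l) x : ℕ∞) : ℝ≥0∞) ≤ ENNReal.ofReal t}).toReal)
        atTop (𝓝 (F t)))
    (hF'anti : AntitoneOn F' (Set.Ici 0))
    (hdens : ∀ t : ℝ, 0 ≤ t → F t = ∫ s in (0:ℝ)..t, F' s)
    {s : ℝ} (hs : 0 < s) (hF'cont : ContinuousAt F' s) (hF'pos : 0 < F' s)
    {k : ℕ → ℕ} (hk1 : ∀ l, 1 ≤ k l)
    (hks : Tendsto (fun l => (μ (A l)).toReal * (k l : ℝ)) atTop (𝓝 s)) :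
    ∀ δ : ℝ, 0 < δ → ∃ B : Set X, MeasurableSet B ∧ μ Bᶜ < ENNReal.ofReal δ ∧
      {l : ℕ | (μ[|B]) {x | hitTime T (A l) x = (k l : ℕ∞)} = 0}.Infinite ∧
      (∀ t : ℝ, ContinuousAt F t →
        Tendsto (fun l =>
            ((μ[|B]) {x | μ (A l) * ((hitTime T (A l) x : ℕ∞) : ℝ≥0∞) ≤ ENNReal.ofReal t}).toReal)
          atTop (𝓝 (F t))) := by
  intro δ hδ
  have hTm := hT.toMeasurePreserving
  have hTmeas := hTm.measurable
  have hFcont : ∀ t : ℝ, 0 < t → ContinuousAt F t := fun t htt =>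
    F_continuousAt hF'anti hdens htt
  have hLLT := HitAux2.llt_zero hTmeas hmeas hpos hrare hcvg hFcont hs hk1 hks
  set r := min δ 1 with hrdef
  have hr0 : 0 < r := lt_min hδ one_pos
  have hr1 : r ≤ 1 := min_le_right _ _
  have hEx : ∀ j : ℕ, ∀ᶠ n in atTop,
      μ {x | hitTime T (A n) x = (k n : ℕ∞)} < ENNReal.ofReal (r/4 * (1/2)^j) := by
    intro j
    have hpos' : 0 < r/4 * (1/2)^j := by positivity
    filter_upwards [hLLT.eventually (gt_mem_nhds hpos')] with n hn
    exact (ENNReal.lt_ofReal_iff_toReal_lt (measure_ne_top μ _)).2 hn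
  obtain ⟨φ, hφmono, hφ⟩ := extraction_forall_of_eventually hEx
  set B : Set X := ⋂ j, {x | hitTime T (A (φ j)) x ≠ (k (φ j) : ℕ∞)} with hBdef
  have hBmeas : MeasurableSet B := MeasurableSet.iInter fun j =>
    HitAux.measurableSet_hitTime_pred hTmeas (hmeas (φ j)) (fun m => m ≠ (k (φ j) : ℕ∞))
  have hBc : Bᶜ = ⋃ j, {x | hitTime T (A (φ j)) x = (k (φ j) : ℕ∞)} := by
    rw [hBdef, Set.compl_iInter]
    refine Set.iUnion_congr fun j => ?_
    rw [Set.compl_setOf]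
    simp only [not_not]
  have h12 : ENNReal.ofReal (1/2) = 2⁻¹ := by
    rw [one_div, ENNReal.ofReal_inv_of_pos two_pos]
    norm_num
  have hμBc : μ Bᶜ ≤ ENNReal.ofReal (r/2) := by
    rw [hBc]
    refine le_trans (measure_iUnion_le _) ?_
    have hterm : ∀ j, μ {x | hitTime T (A (φ j)) x = (k (φ j) : ℕ∞)}
        ≤ ENNReal.ofReal (r/4) * (ENNReal.ofReal (1/2))^j := by
      intro j
      refine le_of_lt (lt_of_lt_of_le (hφ j) (le_of_eq ?_))
      rw [← ENNReal.ofReal_pow (by norm_num), ← ENNReal.ofReal_mul (by positivity)]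
    refine le_trans (ENNReal.tsum_le_tsum hterm) ?_
    rw [ENNReal.tsum_mul_left, ENNReal.tsum_geometric, h12, ENNReal.one_sub_inv_two, inv_inv]
    refine le_of_eq ?_
    calc ENNReal.ofReal (r/4) * 2 = ENNReal.ofReal (r/4) * ENNReal.ofReal 2 := by
          norm_num
      _ = ENNReal.ofReal (r/4 * 2) := (ENNReal.ofReal_mul (by positivity)).symm
      _ = ENNReal.ofReal (r/2) := by congr 1; ring
  have hμBclt : μ Bᶜ < ENNReal.ofReal δ := by
    refine lt_of_le_of_lt hμBc
      (lt_of_lt_of_le ?_ (ENNReal.ofReal_le_ofReal (min_le_left δ 1)))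
    exact (ENNReal.ofReal_lt_ofReal_iff hr0).2 (by linarith)
  have hμBc_half : μ Bᶜ ≤ 2⁻¹ := by
    refine le_trans hμBc (le_trans (ENNReal.ofReal_le_ofReal (by linarith : r/2 ≤ 1/2)) ?_)
    rw [h12]
  have hμB0 : μ B ≠ 0 := by
    intro h0
    have h1 : (1:ℝ≥0∞) ≤ 2⁻¹ := by
      calc (1:ℝ≥0∞) = μ Set.univ := measure_univ.symm
        _ ≤ μ B + μ Bᶜ := by
            rw [← Set.union_compl_self B]
            exact measure_union_le _ _
        _ = μ Bᶜ := by rw [h0, zero_add]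
        _ ≤ 2⁻¹ := hμBc_half
    norm_num at h1
  refine ⟨B, hBmeas, hμBclt, ?_, ?_⟩
  · refine Set.infinite_of_injective_forall_mem (f := fun j => φ j) hφmono.injective ?_
    intro j
    show (μ[|B]) {x | hitTime T (A (φ j)) x = (k (φ j) : ℕ∞)} = 0
    rw [ProbabilityTheory.cond_apply hBmeas]
    have hint : B ∩ {x | hitTime T (A (φ j)) x = (k (φ j) : ℕ∞)} = ∅ := by
      ext x
      simp only [Set.mem_inter_iff, Set.mem_empty_iff_false, iff_false, not_and]
      intro hxB hxk
      exact (Set.mem_iInter.1 hxB j) hxk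
    rw [hint, measure_empty, mul_zero]
  · intro t hFt
    by_cases ht : 0 < t
    · exact main_pos hT hmeas hpos hrare hcvg hFcont hBmeas hμB0 ht hFt
    · push_neg at ht
      have hempty : ∀ l,
          {x | μ (A l) * ((hitTime T (A l) x : ℕ∞) : ℝ≥0∞) ≤ ENNReal.ofReal t}
            = (∅ : Set X) := by
        intro l
        ext x
        simp only [Set.mem_setOf_eq, Set.mem_empty_iff_false, iff_false]
        intro hx
        rw [show ENNReal.ofReal t = 0 from ENNReal.ofReal_eq_zero.2 ht, le_zero_iff] at hx
        have h1 : ((hitTime T (A l) x : ℕ∞) : ℝ≥0∞) ≠ 0 := by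
          have h2 : (1 : ℕ∞) ≤ hitTime T (A l) x := HitAux.one_le_hitTime
          have h3 : (1 : ℝ≥0∞) ≤ ((hitTime T (A l) x : ℕ∞) : ℝ≥0∞) := by
            rw [← ENat.toENNReal_one]
            exact ENat.toENNReal_le.2 h2
          intro h0
          rw [h0] at h3
          norm_num at h3
        exact (mul_ne_zero (hpos l).ne' h1) hx
      have hF0 : F t = 0 := by
        have h1 := hcvg t hFt
        have h2 : (fun l => (μ {x | μ (A l) * ((hitTime T (A l) x : ℕ∞) : ℝ≥0∞)
            ≤ ENNReal.ofReal t}).toReal) = fun _ => (0:ℝ) := by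
          funext l
          rw [hempty l]
          simp
        rw [h2] at h1
        exact tendsto_nhds_unique h1 tendsto_const_nhds
      have h3 : (fun l => ((μ[|B]) {x | μ (A l) * ((hitTime T (A l) x : ℕ∞) : ℝ≥0∞)
          ≤ ENNReal.ofReal t}).toReal) = fun _ => (0:ℝ) := by
        funext l
        rw [hempty l]
        simp
      rw [h3, hF0]
      exact tendsto_const_nhds
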